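/- Let f : ℝ⁴ → ℝ be given by f(x,u,p,q) = (6p/u + 3/x)·q − 6p³/u² − 6p²/(x·u) − 6p/x² − 6u/x³ on the open set where x ≠ 0 and u ≠ 0. Then the relative invariant I₄ = f_{qq}(f_q² + 9 f_p − 3 D_x f_q) − 9 f_{pp} + 18 f_{uq} − 6 f_q f_{pq} vanishes identically on this set. -/

import Mathlib

lemma lin_deriv (a b t : ℝ) : deriv (fun s : ℝ => a * s + b) t = a := by
  have h := ((hasDerivAt_id t).const_mul a).add_const b
  simpa using h.deriv

lemma quad_deriv (a b c t : ℝ) :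
    deriv (fun s : ℝ => a * s ^ 2 + b * s + c) t = 2 * a * t + b := by
  have h := (((hasDerivAt_pow 2 t).const_mul a).add ((hasDerivAt_id t).const_mul b)).add_const c
  simp only [id_eq] at h
  rw [HasDerivAt.deriv (f := fun s : ℝ => a * s ^ 2 + b * s + c) h]; norm_num; ring

lemma cubic_deriv (a b c d t : ℝ) :
    deriv (fun s : ℝ => a * s ^ 3 + b * s ^ 2 + c * s + d) t
      = 3 * a * t ^ 2 + 2 * b * t + c := by
  have h := ((((hasDerivAt_pow 3 t).const_mul a).add ((hasDerivAt_pow 2 t).const_mul b)).add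
      ((hasDerivAt_id t).const_mul c)).add_const d
  simp only [id_eq] at h
  rw [HasDerivAt.deriv (f := fun s : ℝ => a * s ^ 3 + b * s ^ 2 + c * s + d) h]; norm_num; ring

/-- Partial derivative with respect to the first variable `x`. -/
noncomputable def pX (g : ℝ → ℝ → ℝ → ℝ → ℝ) (x u p q : ℝ) : ℝ :=
  deriv (fun t => g t u p q) x

/-- Partial derivative with respect to the second variable `u`. -/
noncomputable def pU (g : ℝ → ℝ → ℝ → ℝ → ℝ) (x u p q : ℝ) : ℝ :=
  deriv (fun t => g x t p q) u

/-- Partial derivative with respect to the third variable `p`. -/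
noncomputable def pP (g : ℝ → ℝ → ℝ → ℝ → ℝ) (x u p q : ℝ) : ℝ :=
  deriv (fun t => g x u t q) p

/-- Partial derivative with respect to the fourth variable `q`. -/
noncomputable def pQ (g : ℝ → ℝ → ℝ → ℝ → ℝ) (x u p q : ℝ) : ℝ :=
  deriv (fun t => g x u p t) q

/-- The total derivative operator
`D_x = ∂/∂x + p ∂/∂u + q ∂/∂p + f ∂/∂q` associated with the ODE `u''' = f`. -/
noncomputable def Dx (f g : ℝ → ℝ → ℝ → ℝ → ℝ) : ℝ → ℝ → ℝ → ℝ → ℝ :=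
  fun x u p q =>
    pX g x u p q + p * pU g x u p q + q * pP g x u p q + f x u p q * pQ g x u p q

/-- The right hand side of the nonlinear ODE of Example 3.1:
`u''' = (6u'/u + 3/x)u'' − 6u'³/u² − 6u'²/(xu) − 6u'/x² − 6u/x³`. -/
noncomputable def f : ℝ → ℝ → ℝ → ℝ → ℝ := fun x u p q =>
  (6 * p / u + 3 / x) * q - 6 * p ^ 3 / u ^ 2 - 6 * p ^ 2 / (x * u)
    - 6 * p / x ^ 2 - 6 * u / x ^ 3

lemma pQ_f (x u p q : ℝ) : pQ f x u p q = 6 * p / u + 3 / x := by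
  unfold pQ f
  have heq : (fun t : ℝ => (6 * p / u + 3 / x) * t - 6 * p ^ 3 / u ^ 2 - 6 * p ^ 2 / (x * u)
      - 6 * p / x ^ 2 - 6 * u / x ^ 3)
      = fun t : ℝ => (6 * p / u + 3 / x) * t +
        (- (6 * p ^ 3 / u ^ 2) - 6 * p ^ 2 / (x * u) - 6 * p / x ^ 2 - 6 * u / x ^ 3) := by
    funext t; ring
  rw [heq, lin_deriv]

lemma pP_f (x u p q : ℝ) :
    pP f x u p q = -18 / u ^ 2 * p ^ 2 + (-12 / (x * u)) * p + (6 * q / u - 6 / x ^ 2) := by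
  unfold pP f
  have heq : (fun t : ℝ => (6 * t / u + 3 / x) * q - 6 * t ^ 3 / u ^ 2 - 6 * t ^ 2 / (x * u)
      - 6 * t / x ^ 2 - 6 * u / x ^ 3)
      = fun t : ℝ => (-6 / u ^ 2) * t ^ 3 + (-6 / (x * u)) * t ^ 2
        + (6 * q / u - 6 / x ^ 2) * t + (3 * q / x - 6 * u / x ^ 3) := by
    funext t; ring
  rw [heq, cubic_deriv]; ring

lemma pU_f (x u p s : ℝ) (hu : u ≠ 0) :
    pU f x u p s = (-6 * p / u ^ 2) * s +
      (12 * p ^ 3 / u ^ 3 + 6 * p ^ 2 / (x * u ^ 2) - 6 / x ^ 3) := by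
  unfold pU f
  have h1 := hasDerivAt_inv hu
  have h2 := (hasDerivAt_pow 2 u).inv (pow_ne_zero 2 hu)
  have hg := (((((h1.const_mul (6 * p * s)).add_const (3 / x * s)).sub
      (h2.const_mul (6 * p ^ 3))).sub (h1.const_mul (6 * p ^ 2 / x))).sub_const
      (6 * p / x ^ 2)).sub ((hasDerivAt_id u).const_mul (6 / x ^ 3))
  simp only [id_eq] at hg
  have heq : (fun t : ℝ => (6 * p / t + 3 / x) * s - 6 * p ^ 3 / t ^ 2 - 6 * p ^ 2 / (x * t)
      - 6 * p / x ^ 2 - 6 * t / x ^ 3)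
      = fun t : ℝ => 6 * p * s * t⁻¹ + 3 / x * s - 6 * p ^ 3 * (t ^ 2)⁻¹
        - 6 * p ^ 2 / x * t⁻¹ - 6 * p / x ^ 2 - 6 / x ^ 3 * t := by
    funext t; ring
  rw [heq, HasDerivAt.deriv (f := fun t : ℝ => 6 * p * s * t⁻¹ + 3 / x * s - 6 * p ^ 3 * (t ^ 2)⁻¹
        - 6 * p ^ 2 / x * t⁻¹ - 6 * p / x ^ 2 - 6 / x ^ 3 * t) hg]
  field_simp
  ring

lemma pQQ_f (x u p q : ℝ) : pQ (pQ f) x u p q = 0 := by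
  show deriv (fun t => pQ f x u p t) q = 0
  have heq : (fun t : ℝ => pQ f x u p t) = fun _ => 6 * p / u + 3 / x :=
    funext fun t => pQ_f x u p t
  rw [heq, deriv_const]

lemma pQP_f (x u p q : ℝ) : pQ (pP f) x u p q = 6 / u := by
  show deriv (fun t => pP f x u p t) q = 6 / u
  have heq : (fun t : ℝ => pP f x u p t)
      = fun t => (6 / u) * t + (-18 / u ^ 2 * p ^ 2 + (-12 / (x * u)) * p - 6 / x ^ 2) := by
    funext t; rw [pP_f]; ring
  rw [heq, lin_deriv]

lemma pQU_f (x u p q : ℝ) (hu : u ≠ 0) : pQ (pU f) x u p q = -6 * p / u ^ 2 := by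
  show deriv (fun t => pU f x u p t) q = _
  have heq : (fun t : ℝ => pU f x u p t)
      = fun t => (-6 * p / u ^ 2) * t + (12 * p ^ 3 / u ^ 3 + 6 * p ^ 2 / (x * u ^ 2) - 6 / x ^ 3) := by
    funext t; rw [pU_f x u p t hu]
  rw [heq, lin_deriv]

lemma pPP_f (x u p q : ℝ) : pP (pP f) x u p q = -36 * p / u ^ 2 - 12 / (x * u) := by
  show deriv (fun t => pP f x u t q) p = _
  have heq : (fun t : ℝ => pP f x u t q)
      = fun t => (-18 / u ^ 2) * t ^ 2 + (-12 / (x * u)) * t + (6 * q / u - 6 / x ^ 2) := by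
    funext t; rw [pP_f]
  rw [heq, quad_deriv]; ring

lemma pXQ_f (x u p q : ℝ) (hx : x ≠ 0) : pX (pQ f) x u p q = -3 / x ^ 2 := by
  show deriv (fun t => pQ f t u p q) x = _
  have heq : (fun t : ℝ => pQ f t u p q) = fun t => 3 * t⁻¹ + 6 * p / u := by
    funext t; rw [pQ_f]; ring
  have h := ((hasDerivAt_inv hx).const_mul (3:ℝ)).add_const (6 * p / u)
  rw [heq, h.deriv]; field_simp

lemma pUQ_f (x u p q : ℝ) (hu : u ≠ 0) : pU (pQ f) x u p q = -6 * p / u ^ 2 := by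
  show deriv (fun t => pQ f x t p q) u = _
  have heq : (fun t : ℝ => pQ f x t p q) = fun t => (6 * p) * t⁻¹ + 3 / x := by
    funext t; rw [pQ_f]; ring
  have h := ((hasDerivAt_inv hu).const_mul (6 * p)).add_const (3 / x)
  rw [heq, h.deriv]; field_simp

lemma pPQ_f (x u p q : ℝ) : pP (pQ f) x u p q = 6 / u := by
  show deriv (fun t => pQ f x u t q) p = _
  have heq : (fun t : ℝ => pQ f x u t q) = fun t => (6 / u) * t + 3 / x := by
    funext t; rw [pQ_f]; ring
  rw [heq, lin_deriv]

/-- For `f` of Example 3.1, the relative invariant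
`I₄ = f_qq (f_q² + 9 f_p − 3 Dₓ f_q) − 9 f_pp + 18 f_uq − 6 f_q f_pq`
vanishes identically on the set `x ≠ 0`, `u ≠ 0`. -/
theorem I4_vanishes_example1 :
    ∀ x u p q : ℝ, x ≠ 0 → u ≠ 0 →
      pQ (pQ f) x u p q
          * ((pQ f x u p q) ^ 2 + 9 * pP f x u p q - 3 * Dx f (pQ f) x u p q)
        - 9 * pP (pP f) x u p q
        + 18 * pQ (pU f) x u p q
        - 6 * pQ f x u p q * pQ (pP f) x u p q = 0 := by
  intro x u p q hx hu
  rw [pQQ_f, zero_mul, pPP_f, pQU_f x u p q hu, pQ_f, pQP_f]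
  field_simp
  ring
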